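/- Let ξ ≥ 1 and let φ*_1, ..., φ*_ξ be integers (with φ*_0 = 0). Suppose there exist integer sequences (α_0,...,α_{ξ+1}) and (β_0,...,β_ξ) with α_j = α_{ξ+1-j}, β_j = β_{ξ-j}, φ*_j = α_j − β_j for 0 ≤ j ≤ ξ+1 (setting φ*_{ξ+1} = 0, β_{ξ+1} = 0), α_0 ≤ α_1 ≤ α_j for 1 ≤ j ≤ ξ, and β_0 ≤ β_1 ≤ β_j for 1 ≤ j ≤ ξ−1. Then for all 1 ≤ j ≤ ⌊(ξ−1)/2⌋: (i) φ*_{ξ-1} + ... + φ*_{ξ-j} ≥ φ*_1 + ... + φ*_j, and (ii) φ*_{ξ-1} + ... + φ*_{ξ-j} ≥ φ*_2 + ... + φ*_{j+1}. -/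

import Mathlib

open Finset

private lemma tele (g : ℕ → ℤ) (n : ℕ) :
    ∑ i ∈ Finset.range n, (g (2 + i) - g (1 + i)) = g (1 + n) - g 1 := by
  induction n with
  | zero => simp
  | succ n ih =>
    rw [Finset.sum_range_succ, ih]
    have : 2 + n = 1 + (n + 1) := by omega
    rw [this]
    ring

/-- Corollary 3 deduction: partial-sum inequalities for flow-polynomial coefficients from a
symmetric decomposition `φ* = α - β`. -/
theorem stmt15 (ξ : ℕ) (hξ : 1 ≤ ξ) (φ α β : ℕ → ℤ)
    (hφ0 : φ 0 = 0) (hφtop : φ (ξ + 1) = 0) (hβtop : β (ξ + 1) = 0)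
    (hαsym : ∀ j ≤ ξ + 1, α j = α (ξ + 1 - j))
    (hβsym : ∀ j ≤ ξ, β j = β (ξ - j))
    (hφ : ∀ j ≤ ξ + 1, φ j = α j - β j)
    (hα01 : α 0 ≤ α 1) (hα1 : ∀ j, 1 ≤ j → j ≤ ξ → α 1 ≤ α j)
    (hβ01 : β 0 ≤ β 1) (hβ1 : ∀ j, 1 ≤ j → j ≤ ξ - 1 → β 1 ≤ β j) :
    ∀ j, 1 ≤ j → j ≤ (ξ - 1) / 2 →
      (∑ i ∈ Finset.range j, φ (1 + i) ≤ ∑ i ∈ Finset.range j, φ (ξ - 1 - i)) ∧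
      (∑ i ∈ Finset.range j, φ (2 + i) ≤ ∑ i ∈ Finset.range j, φ (ξ - 1 - i)) := by
  intro j hj1 hj2
  have hξ3 : 3 ≤ ξ := by omega
  have s1 : ∑ i ∈ Finset.range j, φ (ξ - 1 - i)
      = ∑ i ∈ Finset.range j, (α (2 + i) - β (1 + i)) := by
    refine Finset.sum_congr rfl fun i hi => ?_
    have hi' : i < j := Finset.mem_range.mp hi
    have h1 := hφ (ξ - 1 - i) (by omega)
    have h2 := hαsym (ξ - 1 - i) (by omega)
    have h3 := hβsym (ξ - 1 - i) (by omega)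
    have e2 : ξ + 1 - (ξ - 1 - i) = 2 + i := by omega
    have e3 : ξ - (ξ - 1 - i) = 1 + i := by omega
    rw [h1, h2, e2, h3, e3]
  have s2 : ∑ i ∈ Finset.range j, φ (1 + i)
      = ∑ i ∈ Finset.range j, (α (1 + i) - β (1 + i)) := by
    refine Finset.sum_congr rfl fun i hi => ?_
    have hi' : i < j := Finset.mem_range.mp hi
    exact hφ (1 + i) (by omega)
  have s3 : ∑ i ∈ Finset.range j, φ (2 + i)
      = ∑ i ∈ Finset.range j, (α (2 + i) - β (2 + i)) := by
    refine Finset.sum_congr rfl fun i hi => ?_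
    have hi' : i < j := Finset.mem_range.mp hi
    exact hφ (2 + i) (by omega)
  have tA := tele α j
  have tB := tele β j
  rw [Finset.sum_sub_distrib] at tA tB
  have hαj : α 1 ≤ α (1 + j) := hα1 (1 + j) (by omega) (by omega)
  have hβj : β 1 ≤ β (1 + j) := hβ1 (1 + j) (by omega) (by omega)
  rw [s1, s2, s3, Finset.sum_sub_distrib, Finset.sum_sub_distrib,
    Finset.sum_sub_distrib]
  constructor <;> linarith
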